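/- Let s > 1 and 𝒞 a good dyadic cover of an s-set K ⊂ [0,1)² with Σ_{Q ∈ 𝒞} |Q|ˢ ≤ C. Define f_θ = Σ_{Q ∈ 𝒞} χ_{proj_θ(Q)}·|Q|^{s−1} on L_θ. Then ∫_{−π/2}^{π/2} (∫_{L_θ} f_θ² dm) dθ ≤ C'', where C'' depends only on C and s (not on the diameter of 𝒞). -/

import Mathlib

open MeasureTheory Set Metric ENNReal Real

noncomputable section

abbrev E := EuclideanSpace ℝ (Fin 2)

def dyadicSq (i a b : ℤ) : Set E :=
  {p | p 0 ∈ Set.Ico ((a : ℝ) * 2 ^ (-i)) ((a + 1 : ℝ) * 2 ^ (-i)) ∧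
       p 1 ∈ Set.Ico ((b : ℝ) * 2 ^ (-i)) ((b + 1 : ℝ) * 2 ^ (-i))}

def proj (θ : ℝ) (p : E) : ℝ := p 0 * Real.cos θ + p 1 * Real.sin θ

def dsq (q : ℤ × ℤ × ℤ) : Set E := dyadicSq q.1 q.2.1 q.2.2

def cor (i a b : ℤ) : E := (EuclideanSpace.equiv (Fin 2) ℝ).symm ![(a : ℝ) * 2 ^ (-i), (b : ℝ) * 2 ^ (-i)]

lemma cor_apply0 (i a b : ℤ) : cor i a b 0 = (a : ℝ) * 2 ^ (-i) := rfl
lemma cor_apply1 (i a b : ℤ) : cor i a b 1 = (b : ℝ) * 2 ^ (-i) := rfl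

lemma two_zpow_pos (i : ℤ) : (0:ℝ) < 2 ^ i := zpow_pos (by norm_num) i

lemma cor_mem (i a b : ℤ) : cor i a b ∈ dyadicSq i a b := by
  have h := two_zpow_pos (-i)
  constructor
  · exact ⟨le_refl _, by rw [cor_apply0]; nlinarith⟩
  · exact ⟨le_refl _, by rw [cor_apply1]; nlinarith⟩

lemma dist_eq' (p q : E) : dist p q = Real.sqrt ((p 0 - q 0)^2 + (p 1 - q 1)^2) := by
  rw [EuclideanSpace.dist_eq]; simp [Fin.sum_univ_two, Real.dist_eq, sq_abs]

lemma dist_coord_le (p q : E) : |p 0 - q 0| ≤ dist p q ∧ |p 1 - q 1| ≤ dist p q := by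
  rw [dist_eq']
  constructor <;>
  · rw [← Real.sqrt_sq_eq_abs]
    apply Real.sqrt_le_sqrt; nlinarith [sq_nonneg (p 0 - q 0), sq_nonneg (p 1 - q 1)]

lemma dyadic_dist_le {i a b : ℤ} {p q : E} (hp : p ∈ dyadicSq i a b) (hq : q ∈ dyadicSq i a b) :
    dist p q ≤ Real.sqrt 2 * 2 ^ (-i) := by
  have h := two_zpow_pos (-i)
  rw [dist_eq']
  have h0 : |p 0 - q 0| ≤ 2 ^ (-i) := by
    obtain ⟨⟨a1, a2⟩, _⟩ := hp; obtain ⟨⟨b1, b2⟩, _⟩ := hq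
    rw [abs_le]; push_cast at *; constructor <;> nlinarith
  have h1 : |p 1 - q 1| ≤ 2 ^ (-i) := by
    obtain ⟨_, ⟨a1, a2⟩⟩ := hp; obtain ⟨_, ⟨b1, b2⟩⟩ := hq
    rw [abs_le]; push_cast at *; constructor <;> nlinarith
  have : (p 0 - q 0)^2 + (p 1 - q 1)^2 ≤ 2 * (2 ^ (-i))^2 := by
    nlinarith [abs_nonneg (p 0 - q 0), abs_nonneg (p 1 - q 1), sq_abs (p 0 - q 0), sq_abs (p 1 - q 1)]
  calc Real.sqrt ((p 0 - q 0)^2 + (p 1 - q 1)^2) ≤ Real.sqrt (2 * (2 ^ (-i))^2) :=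
        Real.sqrt_le_sqrt this
    _ = Real.sqrt 2 * 2 ^ (-i) := by
        rw [Real.sqrt_mul (by norm_num), Real.sqrt_sq h.le]

lemma dyadic_bounded (i a b : ℤ) : Bornology.IsBounded (dyadicSq i a b) := by
  apply Bornology.IsBounded.subset (Metric.isBounded_closedBall
    (x := cor i a b) (r := Real.sqrt 2 * 2 ^ (-i)))
  intro p hp
  exact Metric.mem_closedBall.2 (dyadic_dist_le hp (cor_mem i a b))

lemma dyadic_diam (i a b : ℤ) : Metric.diam (dyadicSq i a b) = Real.sqrt 2 * 2 ^ (-i) := by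
  have h := two_zpow_pos (-i)
  apply le_antisymm
  · exact Metric.diam_le_of_forall_dist_le (by positivity) fun p hp q hq => dyadic_dist_le hp hq
  · apply _root_.le_of_forall_pos_le_add
    intro ε hε
    set t : ℝ := 2 ^ (-i)
    set δ : ℝ := min (t/2) (ε / 2)
    have hδ0 : 0 < δ := lt_min (by positivity) (by positivity)
    have hδt : δ < t := (min_le_left _ _).trans_lt (by linarith)
    set p : E := (EuclideanSpace.equiv (Fin 2) ℝ).symm ![(a:ℝ)*t + (t - δ), (b:ℝ)*t + (t - δ)]
    have hp : p ∈ dyadicSq i a b := by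
      have e0 : p 0 = (a:ℝ)*t + (t - δ) := rfl
      have e1 : p 1 = (b:ℝ)*t + (t - δ) := rfl
      refine ⟨⟨?_, ?_⟩, ?_, ?_⟩
      · rw [e0, show ((a:ℝ)) * 2^(-i) = (a:ℝ)*t from rfl]; linarith
      · rw [e0, show ((a:ℝ)+1) * 2^(-i) = ((a:ℝ)+1)*t from rfl]; linarith
      · rw [e1, show ((b:ℝ)) * 2^(-i) = (b:ℝ)*t from rfl]; linarith
      · rw [e1, show ((b:ℝ)+1) * 2^(-i) = ((b:ℝ)+1)*t from rfl]; linarith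
    have hd : dist p (cor i a b) = Real.sqrt 2 * (t - δ) := by
      rw [dist_eq']
      have e0 : p 0 - cor i a b 0 = t - δ := by rw [cor_apply0]; show (a:ℝ)*t + (t-δ) - _ = _; ring
      have e1 : p 1 - cor i a b 1 = t - δ := by rw [cor_apply1]; show (b:ℝ)*t + (t-δ) - _ = _; ring
      rw [e0, e1]
      rw [show (t-δ)^2 + (t-δ)^2 = 2*(t-δ)^2 by ring, Real.sqrt_mul (by norm_num),
        Real.sqrt_sq (by linarith)]
    have := Metric.dist_le_diam_of_mem (dyadic_bounded i a b) hp (cor_mem i a b)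
    rw [hd] at this
    have hs2 : Real.sqrt 2 ≤ 2 := by
      nlinarith [Real.sq_sqrt (by norm_num : (0:ℝ) ≤ 2), Real.sqrt_nonneg 2]
    have : Real.sqrt 2 * t - ε ≤ Real.sqrt 2 * (t - δ) := by
      have : Real.sqrt 2 * δ ≤ ε := by
        have : δ ≤ ε/2 := min_le_right _ _
        nlinarith [Real.sqrt_nonneg 2]
      nlinarith
    linarith

lemma dsq_diam (q : ℤ × ℤ × ℤ) : Metric.diam (dsq q) = Real.sqrt 2 * 2 ^ (-q.1) :=
  dyadic_diam q.1 q.2.1 q.2.2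

lemma dsq_diam_pos (q : ℤ × ℤ × ℤ) : 0 < Metric.diam (dsq q) := by
  rw [dsq_diam]; positivity

lemma proj_lipschitz (θ : ℝ) (p q : E) : |proj θ p - proj θ q| ≤ dist p q := by
  rw [dist_eq']
  have key : (proj θ p - proj θ q)^2 ≤ (p 0 - q 0)^2 + (p 1 - q 1)^2 := by
    have h := Real.sin_sq_add_cos_sq θ
    unfold proj
    nlinarith [sq_nonneg ((p 0 - q 0) * Real.sin θ - (p 1 - q 1) * Real.cos θ)]
  rw [← Real.sqrt_sq_eq_abs]
  exact Real.sqrt_le_sqrt key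

lemma proj_sub (θ : ℝ) (p q : E) : proj θ p - proj θ q = proj θ (p - q) := by
  unfold proj
  have e0 : (p - q) 0 = p 0 - q 0 := rfl
  have e1 : (p - q) 1 = p 1 - q 1 := rfl
  rw [e0, e1]; ring

lemma proj_image_subset (θ : ℝ) (i a b : ℤ) :
    proj θ '' dyadicSq i a b ⊆
      Set.Icc (proj θ (cor i a b) - Metric.diam (dyadicSq i a b))
              (proj θ (cor i a b) + Metric.diam (dyadicSq i a b)) := by
  rintro x ⟨p, hp, rfl⟩
  have h1 : |proj θ p - proj θ (cor i a b)| ≤ Metric.diam (dyadicSq i a b) :=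
    (proj_lipschitz θ p (cor i a b)).trans
      (Metric.dist_le_diam_of_mem (dyadic_bounded i a b) hp (cor_mem i a b))
  rw [abs_le] at h1
  constructor <;> linarith [h1.1, h1.2]

lemma dyadic_convex (i a b : ℤ) : Convex ℝ (dyadicSq i a b) := by
  intro p hp q hq u v hu hv huv
  have e0 : (u • p + v • q) 0 = u * p 0 + v * q 0 := rfl
  have e1 : (u • p + v • q) 1 = u * p 1 + v * q 1 := rfl
  constructor
  · rw [e0]; exact (convex_Ico _ _) hp.1 hq.1 hu hv huv
  · rw [e1]; exact (convex_Ico _ _) hp.2 hq.2 hu hv huv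

def projL (θ : ℝ) : E →ₗ[ℝ] ℝ where
  toFun := proj θ
  map_add' p q := by
    unfold proj
    have e0 : (p + q) 0 = p 0 + q 0 := rfl
    have e1 : (p + q) 1 = p 1 + q 1 := rfl
    rw [e0, e1]; ring
  map_smul' c p := by
    show (c • p) 0 * _ + (c • p) 1 * _ = c • (p 0 * _ + p 1 * _)
    have e0 : (c • p) 0 = c * p 0 := rfl
    have e1 : (c • p) 1 = c * p 1 := rfl
    rw [e0, e1, smul_eq_mul]; ring

lemma proj_image_measurable (θ : ℝ) (i a b : ℤ) :
    MeasurableSet (proj θ '' dyadicSq i a b) := by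
  have : Convex ℝ (proj θ '' dyadicSq i a b) := by
    have := (dyadic_convex i a b).linear_image (projL θ)
    exact this
  exact this.ordConnected.measurableSet

lemma proj_image_vol (θ : ℝ) (i a b : ℤ) :
    volume (proj θ '' dyadicSq i a b) ≤ ENNReal.ofReal (2 * Metric.diam (dyadicSq i a b)) := by
  calc volume (proj θ '' dyadicSq i a b) ≤ volume (Set.Icc (proj θ (cor i a b) - Metric.diam (dyadicSq i a b)) (proj θ (cor i a b) + Metric.diam (dyadicSq i a b))) :=
        measure_mono (proj_image_subset θ i a b)
    _ = ENNReal.ofReal (2 * Metric.diam (dyadicSq i a b)) := by rw [Real.volume_Icc]; ring_nf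

/-! ### Integer dyadic combinatorics -/

def ancIdx (k i a : ℤ) : ℤ := a / 2 ^ (i - k).toNat

def lvl (q q' : ℤ × ℤ × ℤ) : ℤ := min q.1 q'.1

def closeAt (k : ℤ) (q q' : ℤ × ℤ × ℤ) : Prop :=
  |ancIdx k q.1 q.2.1 - ancIdx k q'.1 q'.2.1| ≤ 1 ∧
  |ancIdx k q.1 q.2.2 - ancIdx k q'.1 q'.2.2| ≤ 1

def kSet (q q' : ℤ × ℤ × ℤ) : Set ℤ := {k | k ≤ lvl q q' ∧ closeAt k q q'}

def kst (q q' : ℤ × ℤ × ℤ) : ℤ := sSup (kSet q q')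

lemma my_ediv_ediv (a b c : ℤ) (hb : 0 < b) (hc : 0 < c) : a / b / c = a / (b * c) := by
  have h1 := Int.mul_ediv_add_emod a b
  have h2 := Int.mul_ediv_add_emod (a / b) c
  have hr1 := Int.emod_nonneg a (ne_of_gt hb)
  have hr1' := Int.emod_lt_of_pos a hb
  have hr2 := Int.emod_nonneg (a / b) (ne_of_gt hc)
  have hr2' := Int.emod_lt_of_pos (a / b) hc
  symm
  have : (a % b + b * ((a / b) % c)) + (b * c) * (a / b / c) = a ∧
      0 ≤ a % b + b * ((a / b) % c) ∧ a % b + b * ((a / b) % c) < b * c := by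
    refine ⟨by nlinarith, by nlinarith, by nlinarith⟩
  exact ((Int.ediv_emod_unique (by positivity)).2 ⟨this.1, this.2.1, this.2.2⟩).1

lemma ancIdx_step (k i a : ℤ) (h : k ≤ i) : ancIdx (k - 1) i a = ancIdx k i a / 2 := by
  unfold ancIdx
  rw [my_ediv_ediv a (2 ^ (i - k).toNat) 2 (by positivity) (by norm_num)]
  congr 1
  rw [show (i - (k - 1)).toNat = (i - k).toNat + 1 by omega, pow_succ]

lemma closeAt_step {k : ℤ} {q q' : ℤ × ℤ × ℤ} (hk : k ≤ lvl q q') (h : closeAt k q q') :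
    closeAt (k - 1) q q' := by
  have h1 : k ≤ q.1 := hk.trans (min_le_left _ _)
  have h2 : k ≤ q'.1 := hk.trans (min_le_right _ _)
  obtain ⟨ha, hb⟩ := h
  constructor
  · rw [ancIdx_step k q.1 _ h1, ancIdx_step k q'.1 _ h2]
    rw [abs_le] at ha ⊢; omega
  · rw [ancIdx_step k q.1 _ h1, ancIdx_step k q'.1 _ h2]
    rw [abs_le] at hb ⊢; omega

lemma idx_small (a : ℤ) (n : ℕ) (h : |a| < 2 ^ n) : a / 2 ^ n = 0 ∨ a / 2 ^ n = -1 := by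
  have hp : (0:ℤ) < 2 ^ n := by positivity
  have h1 := Int.mul_ediv_add_emod a (2 ^ n)
  have hr := Int.emod_nonneg a (ne_of_gt hp)
  have hr' := Int.emod_lt_of_pos a hp
  rw [abs_lt] at h
  by_contra hcon
  push_neg at hcon
  have : a / 2 ^ n ≥ 1 ∨ a / 2 ^ n ≤ -2 := by omega
  rcases this with h2 | h2
  · nlinarith
  · nlinarith

lemma closeAt_anti {q q' : ℤ × ℤ × ℤ} {j k : ℤ} (hj : j ≤ k) (hk : k ≤ lvl q q')
    (h : closeAt k q q') : closeAt j q q' := by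
  have : ∀ n ≤ k, closeAt n q q' :=
    Int.le_induction_down h (fun n hn hcn => closeAt_step (hn.trans hk) hcn)
  exact this j hj

lemma kSet_nonempty (q q' : ℤ × ℤ × ℤ) : (kSet q q').Nonempty := by
  set N : ℕ := q.2.1.natAbs + q.2.2.natAbs + q'.2.1.natAbs + q'.2.2.natAbs + 1
  refine ⟨lvl q q' - N, by omega, ?_⟩
  have key : ∀ (i a : ℤ), lvl q q' ≤ i → a.natAbs < N →
      ancIdx (lvl q q' - N) i a = 0 ∨ ancIdx (lvl q q' - N) i a = -1 := by
    intro i a hi ha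
    apply idx_small
    calc |a| < 2 ^ N := by
          have h2 := Nat.lt_two_pow_self (n := N)
          have : a.natAbs < 2 ^ N := lt_of_lt_of_le ha h2.le
          rw [Int.abs_eq_natAbs]
          exact_mod_cast this
      _ ≤ 2 ^ (i - (lvl q q' - N)).toNat := by
          apply pow_le_pow_right₀ (by norm_num)
          omega
  have h1 := key q.1 q.2.1 (min_le_left _ _) (by omega)
  have h2 := key q.1 q.2.2 (min_le_left _ _) (by omega)
  have h3 := key q'.1 q'.2.1 (min_le_right _ _) (by omega)
  have h4 := key q'.1 q'.2.2 (min_le_right _ _) (by omega)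
  constructor <;> [rcases h1 with h1 | h1 <;> rcases h3 with h3 | h3;
    rcases h2 with h2 | h2 <;> rcases h4 with h4 | h4] <;>
    simp [h1, h2, h3, h4]

lemma kSet_bddAbove (q q' : ℤ × ℤ × ℤ) : BddAbove (kSet q q') :=
  ⟨lvl q q', fun _ hk => hk.1⟩

lemma kst_mem (q q' : ℤ × ℤ × ℤ) : kst q q' ∈ kSet q q' :=
  Int.csSup_mem (kSet_nonempty q q') (kSet_bddAbove q q')

lemma kst_le_lvl (q q' : ℤ × ℤ × ℤ) : kst q q' ≤ lvl q q' := (kst_mem q q').1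

lemma le_kst {q q' : ℤ × ℤ × ℤ} {k : ℤ} (h : k ∈ kSet q q') : k ≤ kst q q' :=
  le_csSup (kSet_bddAbove q q') h

lemma closeAt_symm {k : ℤ} {q q' : ℤ × ℤ × ℤ} (h : closeAt k q q') : closeAt k q' q := by
  obtain ⟨h1, h2⟩ := h
  exact ⟨by rwa [abs_sub_comm], by rwa [abs_sub_comm]⟩

lemma kst_symm (q q' : ℤ × ℤ × ℤ) : kst q q' = kst q' q := by
  unfold kst
  congr 1
  ext k
  unfold kSet lvl
  constructor <;> rintro ⟨h1, h2⟩ <;>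
    exact ⟨by rwa [min_comm], closeAt_symm h2⟩

lemma dyadic_subset_anc {k i : ℤ} (a b : ℤ) (h : k ≤ i) :
    dyadicSq i a b ⊆ dyadicSq k (ancIdx k i a) (ancIdx k i b) := by
  set n : ℕ := (i - k).toNat with hn
  have hpow : ((2:ℝ) ^ n) * 2 ^ (-i) = 2 ^ (-k) := by
    rw [← zpow_natCast (2:ℝ) n, ← zpow_add₀ (by norm_num : (2:ℝ) ≠ 0)]
    congr 1
    omega
  have key : ∀ (c : ℤ) (u : ℝ), u ∈ Set.Ico ((c:ℝ) * 2 ^ (-i)) ((c + 1 : ℝ) * 2 ^ (-i)) →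
      u ∈ Set.Ico (((c / 2 ^ n : ℤ) : ℝ) * 2 ^ (-k)) (((c / 2 ^ n : ℤ) + 1 : ℝ) * 2 ^ (-k)) := by
    intro c u hu
    have hp : (0:ℤ) < 2 ^ n := by positivity
    have h1 : (2:ℤ) ^ n * (c / 2 ^ n) ≤ c := by
      have := Int.mul_ediv_add_emod c (2 ^ n)
      have := Int.emod_nonneg c (ne_of_gt hp)
      omega
    have h2 : c + 1 ≤ 2 ^ n * (c / 2 ^ n) + 2 ^ n := by
      have := Int.mul_ediv_add_emod c (2 ^ n)
      have := Int.emod_lt_of_pos c hp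
      omega
    have hti : (0:ℝ) < 2 ^ (-i) := two_zpow_pos _
    constructor
    · calc ((c / 2 ^ n : ℤ) : ℝ) * 2 ^ (-k) = ((2 ^ n * (c / 2 ^ n) : ℤ) : ℝ) * 2 ^ (-i) := by
            push_cast
            rw [← hpow]; ring
        _ ≤ (c : ℝ) * 2 ^ (-i) := by
            apply mul_le_mul_of_nonneg_right _ hti.le
            exact_mod_cast h1
        _ ≤ u := hu.1
    · calc u < (c + 1 : ℝ) * 2 ^ (-i) := hu.2
        _ ≤ ((2 ^ n * (c / 2 ^ n) + 2 ^ n : ℤ) : ℝ) * 2 ^ (-i) := by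
            apply mul_le_mul_of_nonneg_right _ hti.le
            push_cast
            exact_mod_cast h2
        _ = ((c / 2 ^ n : ℤ) + 1 : ℝ) * 2 ^ (-k) := by
            push_cast
            rw [← hpow]; ring
  intro p hp
  exact ⟨key a (p 0) hp.1, key b (p 1) hp.2⟩

lemma coord_sep {k x y : ℤ} {u v : ℝ} (h : 2 ≤ |x - y|)
    (hu : u ∈ Set.Ico ((x:ℝ) * 2 ^ (-k)) ((x + 1 : ℝ) * 2 ^ (-k)))
    (hv : v ∈ Set.Ico ((y:ℝ) * 2 ^ (-k)) ((y + 1 : ℝ) * 2 ^ (-k))) :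
    2 ^ (-k) ≤ |u - v| := by
  have ht : (0:ℝ) < 2 ^ (-k) := two_zpow_pos _
  rcases abs_cases (x - y) with ⟨he, _⟩ | ⟨he, _⟩ <;> rw [he] at h
  · -- x - y ≥ 2
    have hxy : (2:ℤ) ≤ x - y := by omega
    have : ((y:ℝ) + 2) * 2 ^ (-k) ≤ (x:ℝ) * 2 ^ (-k) := by
      apply mul_le_mul_of_nonneg_right _ ht.le
      have : (y:ℝ) + 2 ≤ x := by exact_mod_cast by omega
      linarith
    have := hu.1
    have := hv.2
    rw [le_abs]
    left
    push_cast at *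
    nlinarith
  · have hxy : (2:ℤ) ≤ y - x := by omega
    have : ((x:ℝ) + 2) * 2 ^ (-k) ≤ (y:ℝ) * 2 ^ (-k) := by
      apply mul_le_mul_of_nonneg_right _ ht.le
      have : (x:ℝ) + 2 ≤ y := by exact_mod_cast by omega
      linarith
    have := hv.1
    have := hu.2
    rw [le_abs]
    right
    push_cast at *
    nlinarith

lemma kst_sep {q q' : ℤ × ℤ × ℤ} (h : kst q q' < lvl q q') {p p' : E}
    (hp : p ∈ dsq q) (hp' : p' ∈ dsq q') :
    (2:ℝ) ^ (-(kst q q' + 1)) ≤ dist p p' := by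
  set m : ℤ := kst q q' + 1 with hm
  have hml : m ≤ lvl q q' := h
  have hnc : ¬ closeAt m q q' := by
    intro hc
    have : m ≤ kst q q' := le_kst ⟨hml, hc⟩
    omega
  have hmq : m ≤ q.1 := hml.trans (min_le_left _ _)
  have hmq' : m ≤ q'.1 := hml.trans (min_le_right _ _)
  have hp2 := dyadic_subset_anc q.2.1 q.2.2 hmq hp
  have hp2' := dyadic_subset_anc q'.2.1 q'.2.2 hmq' hp'
  unfold closeAt at hnc
  push_neg at hnc
  by_cases hca : |ancIdx m q.1 q.2.1 - ancIdx m q'.1 q'.2.1| ≤ 1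
  · have hcb := hnc hca
    have := coord_sep (by omega) hp2.2 hp2'.2
    exact this.trans ((dist_coord_le p p').2.trans_eq' rfl)
  · have := coord_sep (by omega) hp2.1 hp2'.1
    exact this.trans ((dist_coord_le p p').1.trans_eq' rfl)


lemma arcsin_le_pi_div_two_mul (u : ℝ) (h0 : 0 ≤ u) (h1 : u ≤ 1) :
    Real.arcsin u ≤ π/2 * u := by
  have ha1 : 0 ≤ Real.arcsin u := Real.arcsin_nonneg.2 h0
  have ha2 : Real.arcsin u ≤ π/2 := Real.arcsin_le_pi_div_two u
  have h := Real.mul_le_sin ha1 ha2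
  rw [Real.sin_arcsin (by linarith) h1] at h
  have hπ := Real.pi_pos
  calc Real.arcsin u = π/2 * (2/π * Real.arcsin u) := by field_simp
    _ ≤ π/2 * u := mul_le_mul_of_nonneg_left h (by positivity)

lemma abs_sin_le_of_abs_sin_le {x' c : ℝ} (hx' : |x'| ≤ π/2) (hc : 0 ≤ c) (hc2 : c ≤ π/2)
    (h : |Real.sin x'| ≤ Real.sin c) : |x'| ≤ c := by
  have habs : |Real.sin x'| = Real.sin |x'| := by
    rcases abs_cases x' with ⟨he, hpos⟩ | ⟨he, hneg⟩
    · rw [he]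
      rw [abs_of_nonneg (Real.sin_nonneg_of_nonneg_of_le_pi (by linarith [he ▸ abs_nonneg x'])
        (by linarith [Real.pi_pos, he ▸ hx']))]
    · have hb : -π ≤ x' := by
        have : -x' ≤ π/2 := he ▸ hx'
        linarith [Real.pi_pos]
      have hsn : Real.sin x' ≤ 0 := Real.sin_nonpos_of_nonpos_of_neg_pi_le hneg.le hb
      rw [abs_of_nonpos hsn, he, Real.sin_neg]
  rw [habs] at h
  by_contra hlt
  push_neg at hlt
  have hmem1 : c ∈ Set.Icc (-(π/2)) (π/2) := ⟨by linarith, hc2⟩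
  have hmem2 : |x'| ∈ Set.Icc (-(π/2)) (π/2) := ⟨by linarith [abs_nonneg x'], hx'⟩
  have := Real.strictMonoOn_sin hmem1 hmem2 hlt
  linarith

lemma angle_measure {u v R : ℝ} (hR : 0 ≤ R) (hD : 0 < Real.sqrt (u^2 + v^2)) :
    volume {θ : ℝ | θ ∈ Set.Icc (-(π/2)) (π/2) ∧ |u * Real.cos θ + v * Real.sin θ| ≤ R} ≤
      ENNReal.ofReal (4 * π * (R / Real.sqrt (u^2 + v^2))) := by
  have hπ := Real.pi_pos
  set D := Real.sqrt (u^2 + v^2) with hDdef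
  by_cases hRD : D ≤ R
  · calc volume {θ : ℝ | θ ∈ Set.Icc (-(π/2)) (π/2) ∧ |u * Real.cos θ + v * Real.sin θ| ≤ R}
        ≤ volume (Set.Icc (-(π/2)) (π/2)) := measure_mono (fun θ hθ => hθ.1)
      _ = ENNReal.ofReal π := by rw [Real.volume_Icc]; ring_nf
      _ ≤ ENNReal.ofReal (4 * π * (R / D)) := by
          apply ENNReal.ofReal_le_ofReal
          have : (1:ℝ) ≤ R / D := (one_le_div hD).2 hRD
          nlinarith
  push_neg at hRD
  set z : ℂ := ⟨u, v⟩ with hz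
  have hzabs : ‖z‖ = D := by
    rw [Complex.norm_def, Complex.normSq_mk]
    congr 1; ring
  have hz0 : z ≠ 0 := by
    intro h0
    rw [h0] at hzabs
    simp at hzabs
    exact absurd hzabs (ne_of_lt hD)
  set φ := z.arg with hφ
  have hφ1 : -π < φ := Complex.neg_pi_lt_arg z
  have hφ2 : φ ≤ π := Complex.arg_le_pi z
  have hcosφ : Real.cos φ = u / D := by rw [hφ, Complex.cos_arg hz0, hzabs]
  have hsinφ : Real.sin φ = v / D := by rw [hφ, Complex.sin_arg, hzabs]
  have key : ∀ θ, u * Real.cos θ + v * Real.sin θ = D * Real.cos (θ - φ) := by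
    intro θ
    rw [Real.cos_sub, hcosφ, hsinφ]
    field_simp
  set c := Real.arcsin (R / D) with hc
  have hRD0 : 0 ≤ R / D := div_nonneg hR hD.le
  have hRD1 : R / D ≤ 1 := by
    rw [div_le_one hD]; exact hRD.le
  have hc0 : 0 ≤ c := Real.arcsin_nonneg.2 hRD0
  have hc2 : c ≤ π/2 := Real.arcsin_le_pi_div_two _
  have claim : {θ : ℝ | θ ∈ Set.Icc (-(π/2)) (π/2) ∧ |u * Real.cos θ + v * Real.sin θ| ≤ R} ⊆
      ⋃ k ∈ Finset.Icc (-2:ℤ) 1, Set.Icc (φ + π/2 + k*π - c) (φ + π/2 + k*π + c) := by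
    rintro θ ⟨hθI, hθR⟩
    rw [key θ, abs_mul, abs_of_pos hD] at hθR
    have hcost : |Real.cos (θ - φ)| ≤ R / D := by
      rw [le_div_iff₀ hD]; linarith [hθR]
    obtain ⟨hθ1, hθ2⟩ := hθI
    set t := θ - φ with ht
    set x := t - π/2 with hx
    set k' : ℤ := round (x / π) with hk'
    set x' := x - k' * π with hx'
    have hx'le : |x'| ≤ π/2 := by
      have h1 : x' = π * (x/π - k') := by field_simp [hx']; ring
      rw [h1, abs_mul, abs_of_pos hπ]
      have := abs_sub_round (x / π)
      nlinarith
    have hsin1 : |Real.sin x| = |Real.cos t| := by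
      rw [hx, Real.sin_sub_pi_div_two, abs_neg]
    have hsin2 : |Real.sin x'| = |Real.sin x| := by
      have hxe : Real.sin x = Real.sin (x' + k' * π) := by
        congr 1
        rw [hx']; ring
      rw [hxe, Real.sin_add_int_mul_pi, abs_mul]
      have : |((-1:ℝ)) ^ k'| = 1 := by
        rcases Int.even_or_odd k' with he | ho
        · rw [he.neg_one_zpow]; simp
        · rw [Odd.neg_one_zpow ho]; simp
      rw [this, one_mul]
    have hx'c : |x'| ≤ c := by
      apply abs_sin_le_of_abs_sin_le hx'le hc0 hc2
      rw [hsin2, hsin1, hc, Real.sin_arcsin (by linarith) hRD1]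
      exact hcost
    have hkb : k' ∈ Finset.Icc (-2:ℤ) 1 := by
      have e1 : (k':ℝ) * π = x - x' := by rw [hx']; ring
      have hxb1 : -(2*π) ≤ x := by rw [hx, ht]; linarith
      have hxb2 : x < π := by rw [hx, ht]; linarith
      have habs := abs_le.1 hx'le
      have hl : (-3:ℝ) < (k':ℝ) :=
        lt_of_mul_lt_mul_right (by linarith [habs.1, habs.2] : (-3:ℝ)*π < (k':ℝ)*π) hπ.le
      have hr : (k':ℝ) < 2 :=
        lt_of_mul_lt_mul_right (by linarith [habs.1, habs.2] : (k':ℝ)*π < 2*π) hπ.le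
      have hl' : (-3:ℤ) < k' := by exact_mod_cast hl
      have hr' : k' < (2:ℤ) := by exact_mod_cast hr
      rw [Finset.mem_Icc]; omega
    apply Set.mem_biUnion hkb
    have habs := abs_le.1 hx'c
    have hθeq : θ = φ + π/2 + k'*π + x' := by rw [hx', hx, ht]; ring
    rw [hθeq]
    exact Set.mem_Icc.2 ⟨by linarith [habs.1], by linarith [habs.2]⟩
  calc volume {θ : ℝ | θ ∈ Set.Icc (-(π/2)) (π/2) ∧ |u * Real.cos θ + v * Real.sin θ| ≤ R}
      ≤ volume (⋃ k ∈ Finset.Icc (-2:ℤ) 1, Set.Icc (φ + π/2 + k*π - c) (φ + π/2 + k*π + c)) :=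
        measure_mono claim
    _ ≤ ∑ k ∈ Finset.Icc (-2:ℤ) 1, volume (Set.Icc (φ + π/2 + k*π - c) (φ + π/2 + k*π + c)) :=
        measure_biUnion_finset_le _ _
    _ = ∑ _k ∈ Finset.Icc (-2:ℤ) 1, ENNReal.ofReal (2*c) := by
        apply Finset.sum_congr rfl
        intro k _
        rw [Real.volume_Icc]
        ring_nf
    _ = (4:ℕ) • ENNReal.ofReal (2*c) := by
        rw [Finset.sum_const]
        congr 1
    _ = ENNReal.ofReal (8*c) := by
        rw [nsmul_eq_mul]
        rw [show ((4:ℕ):ℝ≥0∞) = ENNReal.ofReal (4:ℝ) by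
          rw [ENNReal.ofReal_ofNat]; norm_num]
        rw [← ENNReal.ofReal_mul (by norm_num)]
        congr 1
        ring
    _ ≤ ENNReal.ofReal (4 * π * (R / D)) := by
        apply ENNReal.ofReal_le_ofReal
        have := arcsin_le_pi_div_two_mul (R/D) hRD0 hRD1
        rw [hc]
        nlinarith
open Finset

lemma sum_pow_le_geom (T : Finset ℕ) {r : ℝ} (h0 : 0 ≤ r) (h1 : r < 1) :
    ∑ n ∈ T, r ^ n ≤ 1 / (1 - r) := by
  have hsub : T ⊆ Finset.range (T.sup id + 1) := fun n hn =>
    Finset.mem_range.2 (Nat.lt_succ_of_le (Finset.le_sup (f := id) hn))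
  calc ∑ n ∈ T, r^n ≤ ∑ n ∈ Finset.range (T.sup id + 1), r^n :=
        Finset.sum_le_sum_of_subset_of_nonneg hsub (fun i _ _ => by positivity)
    _ ≤ ∑' n, r^n := (summable_geometric_of_lt_one h0 h1).sum_le_tsum _
        (fun i _ => by positivity)
    _ = 1/(1-r) := by rw [tsum_geometric_of_lt_one h0 h1, one_div]

lemma sum_zpow_nonpos_le (S : Finset ℤ) (hS : ∀ k ∈ S, k ≤ 0) : ∑ k ∈ S, (2:ℝ) ^ k ≤ 2 := by
  have hinj : Set.InjOn (fun k : ℤ => (-k).toNat) S := by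
    intro x hx y hy hxy
    have := hS x hx; have := hS y hy
    simp only at hxy
    omega
  have : ∑ k ∈ S, (2:ℝ) ^ k = ∑ n ∈ S.image (fun k => (-k).toNat), ((1:ℝ)/2) ^ n := by
    rw [Finset.sum_image hinj]
    apply Finset.sum_congr rfl
    intro k hk
    have hk0 := hS k hk
    rw [one_div, inv_pow, ← zpow_natCast (2:ℝ), Int.toNat_of_nonneg (by omega : (0:ℤ) ≤ -k),
      ← zpow_neg, neg_neg]
  rw [this]
  calc ∑ n ∈ S.image (fun k => (-k).toNat), ((1:ℝ)/2) ^ n ≤ 1/(1-1/2) :=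
        sum_pow_le_geom _ (by norm_num) (by norm_num)
    _ = 2 := by norm_num

lemma sum_zpow_pos_le (S : Finset ℤ) {r : ℝ} (h0 : 0 ≤ r) (h1 : r < 1)
    (hS : ∀ k ∈ S, 1 ≤ k) : ∑ k ∈ S, r ^ k ≤ 1 / (1 - r) := by
  have hinj : Set.InjOn (fun k : ℤ => k.toNat) S := by
    intro x hx y hy hxy
    have := hS x hx; have := hS y hy
    simp only at hxy
    omega
  have : ∑ k ∈ S, r ^ k = ∑ n ∈ S.image (fun k => k.toNat), r ^ n := by
    rw [Finset.sum_image hinj]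
    apply Finset.sum_congr rfl
    intro k hk
    have hk0 := hS k hk
    rw [← zpow_natCast r, Int.toNat_of_nonneg (by omega)]
  rw [this]
  exact sum_pow_le_geom _ h0 h1

/-! ### Pair bound functions -/

def zc (q : ℤ × ℤ × ℤ) : E := cor q.1 q.2.1 q.2.2

lemma zc_mem (q : ℤ × ℤ × ℤ) : zc q ∈ dsq q := cor_mem q.1 q.2.1 q.2.2

def Sang (q q' : ℤ × ℤ × ℤ) : Set ℝ :=
  {ϑ : ℝ | |proj ϑ (zc q - zc q')| ≤ 2 * max (Metric.diam (dsq q)) (Metric.diam (dsq q'))}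

noncomputable def gfun (s : ℝ) (q q' : ℤ × ℤ × ℤ) (θ : ℝ) : ℝ :=
  Metric.diam (dsq q) ^ (s-1) * Metric.diam (dsq q') ^ (s-1) *
    (2 * min (Metric.diam (dsq q)) (Metric.diam (dsq q'))) *
    (if kst q q' = lvl q q' then 1 else Set.indicator (Sang q q') (fun _ => 1) θ)

lemma gfun_nonneg (s : ℝ) (q q' : ℤ × ℤ × ℤ) (θ : ℝ) : 0 ≤ gfun s q q' θ := by
  unfold gfun
  have h1 := dsq_diam_pos q
  have h2 := dsq_diam_pos q'
  apply mul_nonneg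
  · apply mul_nonneg
    · exact mul_nonneg (Real.rpow_nonneg h1.le _) (Real.rpow_nonneg h2.le _)
    · have := lt_min h1 h2
      positivity
  · split
    · norm_num
    · exact Set.indicator_nonneg (fun _ _ => by norm_num) θ

lemma Sang_measurable (q q' : ℤ × ℤ × ℤ) : MeasurableSet (Sang q q') := by
  have hcont : Continuous fun ϑ : ℝ => |proj ϑ (zc q - zc q')| := by
    apply Continuous.abs
    unfold proj
    exact (continuous_const.mul Real.continuous_cos).add (continuous_const.mul Real.continuous_sin)
  exact (isClosed_le hcont continuous_const).measurableSet

/-- The image of a dyadic square under projection is trapped in an interval of length twice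
the diameter around the projected corner. -/
lemma image_subset' (θ : ℝ) (q : ℤ × ℤ × ℤ) :
    proj θ '' dsq q ⊆
      Set.Icc (proj θ (zc q) - Metric.diam (dsq q)) (proj θ (zc q) + Metric.diam (dsq q)) :=
  proj_image_subset θ q.1 q.2.1 q.2.2

lemma vol_inter_le (θ : ℝ) (q q' : ℤ × ℤ × ℤ) :
    (volume (proj θ '' dsq q ∩ proj θ '' dsq q')).toReal ≤
      2 * min (Metric.diam (dsq q)) (Metric.diam (dsq q')) := by
  have h1 := dsq_diam_pos q
  have h2 := dsq_diam_pos q'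
  have key : ∀ (r r' : ℤ × ℤ × ℤ), (volume (proj θ '' dsq r ∩ proj θ '' dsq r')).toReal ≤
      2 * Metric.diam (dsq r) := by
    intro r r'
    apply ENNReal.toReal_le_of_le_ofReal (mul_nonneg (by norm_num) Metric.diam_nonneg)
    calc volume (proj θ '' dsq r ∩ proj θ '' dsq r') ≤ volume (proj θ '' dsq r) :=
          measure_mono Set.inter_subset_left
      _ ≤ ENNReal.ofReal (2 * Metric.diam (dsq r)) := proj_image_vol θ r.1 r.2.1 r.2.2
  rcases le_total (Metric.diam (dsq q)) (Metric.diam (dsq q')) with h | h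
  · rw [min_eq_left h]; exact key q q'
  · rw [min_eq_right h]
    calc (volume (proj θ '' dsq q ∩ proj θ '' dsq q')).toReal
        = (volume (proj θ '' dsq q' ∩ proj θ '' dsq q)).toReal := by rw [Set.inter_comm]
      _ ≤ 2 * Metric.diam (dsq q') := key q' q

def Aset (θ : ℝ) (q : ℤ × ℤ × ℤ) : Set ℝ := proj θ '' dsq q

noncomputable def cw (s : ℝ) (q : ℤ × ℤ × ℤ) : ℝ := Metric.diam (dsq q) ^ (s - 1)

lemma cw_nonneg (s : ℝ) (q : ℤ × ℤ × ℤ) : 0 ≤ cw s q :=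
  Real.rpow_nonneg (dsq_diam_pos q).le _

lemma inner_bound (s : ℝ) (𝒞 : Finset (ℤ × ℤ × ℤ)) (θ : ℝ) :
    (∫ x, (∑ q ∈ 𝒞, (Aset θ q).indicator (fun _ => cw s q) x) ^ 2 ∂volume) ≤
      ∑ p ∈ 𝒞 ×ˢ 𝒞, gfun s p.1 p.2 θ := by
  have hAm : ∀ q : ℤ × ℤ × ℤ, MeasurableSet (Aset θ q) := fun q =>
    proj_image_measurable θ q.1 q.2.1 q.2.2
  have hAv : ∀ q q' : ℤ × ℤ × ℤ, volume (Aset θ q ∩ Aset θ q') < ⊤ := fun q q' =>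
    lt_of_le_of_lt (le_trans (measure_mono Set.inter_subset_left)
      (proj_image_vol θ q.1 q.2.1 q.2.2)) ENNReal.ofReal_lt_top
  have hint : ∀ p : (ℤ × ℤ × ℤ) × (ℤ × ℤ × ℤ),
      Integrable ((Aset θ p.1 ∩ Aset θ p.2).indicator (fun _ => cw s p.1 * cw s p.2)) volume := by
    intro p
    rw [integrable_indicator_iff ((hAm p.1).inter (hAm p.2))]
    exact integrableOn_const (hAv p.1 p.2).ne
  calc (∫ x, (∑ q ∈ 𝒞, (Aset θ q).indicator (fun _ => cw s q) x) ^ 2 ∂volume)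
      = ∫ x, ∑ p ∈ 𝒞 ×ˢ 𝒞,
          (Aset θ p.1 ∩ Aset θ p.2).indicator (fun _ => cw s p.1 * cw s p.2) x ∂volume := by
        congr 1
        funext x
        rw [sq, Finset.sum_mul_sum, ← Finset.sum_product']
        apply Finset.sum_congr rfl
        intro p _
        rw [← Set.inter_indicator_mul]
    _ = ∑ p ∈ 𝒞 ×ˢ 𝒞, ∫ x, (Aset θ p.1 ∩ Aset θ p.2).indicator
          (fun _ => cw s p.1 * cw s p.2) x ∂volume :=
        integral_finset_sum _ (fun p _ => hint p)
    _ ≤ ∑ p ∈ 𝒞 ×ˢ 𝒞, gfun s p.1 p.2 θ := by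
        apply Finset.sum_le_sum
        intro p _
        rw [integral_indicator_const _ ((hAm p.1).inter (hAm p.2)), smul_eq_mul]
        set q := p.1
        set q' := p.2
        have hT : (volume (Aset θ q ∩ Aset θ q')).toReal ≤
            2 * min (Metric.diam (dsq q)) (Metric.diam (dsq q')) := vol_inter_le θ q q'
        have hT0 : 0 ≤ (volume (Aset θ q ∩ Aset θ q')).toReal := ENNReal.toReal_nonneg
        have hc0 : 0 ≤ cw s q * cw s q' := mul_nonneg (cw_nonneg s q) (cw_nonneg s q')
        by_cases hne : (Aset θ q ∩ Aset θ q').Nonempty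
        · have hind : (if kst q q' = lvl q q' then (1:ℝ)
              else Set.indicator (Sang q q') (fun _ => 1) θ) = 1 := by
            split
            · rfl
            · obtain ⟨x, hx1, hx2⟩ := hne
              have h1 := image_subset' θ q hx1
              have h2 := image_subset' θ q' hx2
              rw [Set.indicator_of_mem _ _]
              show |proj θ (zc q - zc q')| ≤ _
              rw [← proj_sub]
              rw [Set.mem_Icc] at h1 h2
              rw [abs_le]
              constructor
              · have := le_max_left (Metric.diam (dsq q)) (Metric.diam (dsq q'))
                have := le_max_right (Metric.diam (dsq q)) (Metric.diam (dsq q'))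
                linarith [h1.1, h1.2, h2.1, h2.2]
              · have := le_max_left (Metric.diam (dsq q)) (Metric.diam (dsq q'))
                have := le_max_right (Metric.diam (dsq q)) (Metric.diam (dsq q'))
                linarith [h1.1, h1.2, h2.1, h2.2]
          unfold gfun
          rw [hind, mul_one]
          calc (volume (Aset θ q ∩ Aset θ q')).toReal * (cw s q * cw s q')
              ≤ (2 * min (Metric.diam (dsq q)) (Metric.diam (dsq q'))) * (cw s q * cw s q') :=
                mul_le_mul_of_nonneg_right hT hc0
            _ = cw s q * cw s q' *
                  (2 * min (Metric.diam (dsq q)) (Metric.diam (dsq q'))) := by ring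
            _ = Metric.diam (dsq q) ^ (s-1) * Metric.diam (dsq q') ^ (s-1) *
                  (2 * min (Metric.diam (dsq q)) (Metric.diam (dsq q'))) := rfl
        · rw [Set.not_nonempty_iff_eq_empty] at hne
          rw [hne]
          simp only [measureReal_empty, zero_mul]
          exact gfun_nonneg s q q' θ

lemma gfun_integrable (s : ℝ) (q q' : ℤ × ℤ × ℤ) :
    IntegrableOn (gfun s q q') (Set.Icc (-(π/2)) (π/2)) volume := by
  unfold gfun
  by_cases hc : kst q q' = lvl q q'
  · simp only [if_pos hc, mul_one]
    exact integrableOn_const measure_Icc_lt_top.ne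
  · simp only [if_neg hc]
    apply Integrable.const_mul
    show Integrable ((Sang q q').indicator fun _ => (1:ℝ)) _
    rw [integrable_indicator_iff (Sang_measurable q q')]
    apply integrableOn_const
    rw [Measure.restrict_apply (Sang_measurable q q')]
    exact (lt_of_le_of_lt (measure_mono Set.inter_subset_right) measure_Icc_lt_top).ne
    exact enorm_ne_top

noncomputable def Pfun (s : ℝ) (q q' : ℤ × ℤ × ℤ) : ℝ :=
  Metric.diam (dsq q) ^ (s-1) * Metric.diam (dsq q') ^ (s-1) *
    (2 * min (Metric.diam (dsq q)) (Metric.diam (dsq q'))) *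
    (if kst q q' = lvl q q' then π else
      8 * π * max (Metric.diam (dsq q)) (Metric.diam (dsq q')) * 2 ^ (kst q q' + 1))

lemma Pfun_nonneg (s : ℝ) (q q' : ℤ × ℤ × ℤ) : 0 ≤ Pfun s q q' := by
  have hπ := Real.pi_pos
  have h1 := dsq_diam_pos q
  have h2 := dsq_diam_pos q'
  have hmin := lt_min h1 h2
  have hmax : (0:ℝ) < max (Metric.diam (dsq q)) (Metric.diam (dsq q')) := lt_max_iff.2 (Or.inl h1)
  unfold Pfun
  apply mul_nonneg
  · apply mul_nonneg (mul_nonneg (Real.rpow_nonneg h1.le _) (Real.rpow_nonneg h2.le _))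
    positivity
  · split
    · exact hπ.le
    · have := two_zpow_pos (kst q q' + 1)
      positivity

lemma lvl_symm (q q' : ℤ × ℤ × ℤ) : lvl q q' = lvl q' q := min_comm _ _

lemma Pfun_symm (s : ℝ) (q q' : ℤ × ℤ × ℤ) : Pfun s q q' = Pfun s q' q := by
  unfold Pfun
  rw [kst_symm q q', lvl_symm q q', min_comm (Metric.diam (dsq q)) (Metric.diam (dsq q')),
    max_comm (Metric.diam (dsq q)) (Metric.diam (dsq q')),
    mul_comm (Metric.diam (dsq q) ^ (s-1)) (Metric.diam (dsq q') ^ (s-1))]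

lemma gfun_integral_le (s : ℝ) (q q' : ℤ × ℤ × ℤ) :
    (∫ θ in Set.Icc (-(π/2)) (π/2), gfun s q q' θ) ≤ Pfun s q q' := by
  have hπ := Real.pi_pos
  have h1 := dsq_diam_pos q
  have h2 := dsq_diam_pos q'
  have hc0 : 0 ≤ Metric.diam (dsq q) ^ (s-1) * Metric.diam (dsq q') ^ (s-1) *
      (2 * min (Metric.diam (dsq q)) (Metric.diam (dsq q'))) := by
    have hmin := lt_min h1 h2
    have := Real.rpow_nonneg h1.le (s-1)
    have := Real.rpow_nonneg h2.le (s-1)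
    positivity
  by_cases hc : kst q q' = lvl q q'
  · unfold gfun Pfun
    simp only [if_pos hc, mul_one]
    rw [setIntegral_const, Real.volume_real_Icc, smul_eq_mul]
    apply le_of_eq
    rw [max_eq_left (by linarith)]
    ring
  · unfold gfun Pfun
    simp only [if_neg hc]
    rw [MeasureTheory.integral_const_mul, integral_indicator_const _ (Sang_measurable q q'),
      measureReal_restrict_apply (Sang_measurable q q'), smul_eq_mul, mul_one]
    apply mul_le_mul_of_nonneg_left _ hc0
    -- volume (Sang ∩ Icc) bound
    set w : E := zc q - zc q' with hw
    have hwd : Real.sqrt ((w 0)^2 + (w 1)^2) = dist (zc q) (zc q') := by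
      rw [dist_eq']
      rfl
    have hklt : kst q q' < lvl q q' := lt_of_le_of_ne (kst_le_lvl q q') hc
    have hsep : (2:ℝ) ^ (-(kst q q' + 1)) ≤ dist (zc q) (zc q') :=
      kst_sep hklt (zc_mem q) (zc_mem q')
    have hD : 0 < dist (zc q) (zc q') := lt_of_lt_of_le (two_zpow_pos _) hsep
    set m := max (Metric.diam (dsq q)) (Metric.diam (dsq q')) with hm
    have hm0 : 0 < m := lt_max_iff.2 (Or.inl h1)
    have hseteq : Sang q q' ∩ Set.Icc (-(π/2)) (π/2) =
        {θ : ℝ | θ ∈ Set.Icc (-(π/2)) (π/2) ∧ |w 0 * Real.cos θ + w 1 * Real.sin θ| ≤ 2 * m} := by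
      ext ϑ
      exact and_comm
    have hvol := angle_measure (u := w 0) (v := w 1) (R := 2 * m) (by positivity)
      (hwd ▸ hD)
    rw [hwd] at hvol
    rw [hseteq]
    apply le_trans (ENNReal.toReal_le_of_le_ofReal (by positivity) hvol)
    -- 4π(2m/D) ≤ 8π m 2^{kst+1}
    set D := dist (zc q) (zc q')
    set t : ℝ := 2 ^ (kst q q' + 1) with ht
    have ht0 : 0 < t := two_zpow_pos _
    have hinv : t⁻¹ ≤ D := by
      rw [ht, ← zpow_neg]
      exact hsep
    have h1t : 1 ≤ t * D := by
      calc (1:ℝ) = t * t⁻¹ := (mul_inv_cancel₀ (ne_of_gt ht0)).symm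
        _ ≤ t * D := mul_le_mul_of_nonneg_left hinv ht0.le
    have he : 4 * π * (2 * m / D) = 8*π*m/D := by ring
    rw [he, div_le_iff₀ hD]
    nlinarith [h1t, hm0, hπ, ht0, mul_pos hπ hm0]

open scoped Classical in
lemma nine_sum {s C : ℝ} {𝒞 : Finset (ℤ × ℤ × ℤ)}
    (hgood : ∀ i a b : ℤ,
      (∑ q ∈ 𝒞.filter (fun q => dsq q ⊆ dyadicSq i a b), Metric.diam (dsq q) ^ s) ≤
        C * Metric.diam (dyadicSq i a b) ^ s)
    (q : ℤ × ℤ × ℤ) (k : ℤ) (F : Finset (ℤ × ℤ × ℤ)) (hF : F ⊆ 𝒞)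
    (hcond : ∀ q' ∈ F, k ≤ q'.1 ∧ closeAt k q q') :
    ∑ q' ∈ F, Metric.diam (dsq q') ^ s ≤ 9 * (C * (Real.sqrt 2 * 2 ^ (-k)) ^ s) := by
  classical
  set α := ancIdx k q.1 q.2.1 with hα
  set β := ancIdx k q.1 q.2.2 with hβ
  set off : ℤ × ℤ × ℤ → ℤ × ℤ := fun q' =>
    (ancIdx k q'.1 q'.2.1 - α, ancIdx k q'.1 q'.2.2 - β) with hoff
  set E9 : Finset (ℤ × ℤ) := ({-1, 0, 1} : Finset ℤ) ×ˢ ({-1, 0, 1} : Finset ℤ) with hE9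
  have hmaps : ∀ q' ∈ F, off q' ∈ E9 := by
    intro q' hq'
    obtain ⟨_, h2, h3⟩ := hcond q' hq'
    rw [hE9, Finset.mem_product]
    constructor
    · have : ancIdx k q'.1 q'.2.1 - α = -1 ∨ ancIdx k q'.1 q'.2.1 - α = 0 ∨
          ancIdx k q'.1 q'.2.1 - α = 1 := by rw [abs_le] at h2; omega
      simp only [hoff, Finset.mem_insert, Finset.mem_singleton]
      tauto
    · have : ancIdx k q'.1 q'.2.2 - β = -1 ∨ ancIdx k q'.1 q'.2.2 - β = 0 ∨
          ancIdx k q'.1 q'.2.2 - β = 1 := by rw [abs_le] at h3; omega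
      simp only [hoff, Finset.mem_insert, Finset.mem_singleton]
      tauto
  rw [← Finset.sum_fiberwise_of_maps_to hmaps]
  have hbound : ∀ e ∈ E9, (∑ q' ∈ F.filter (fun q' => off q' = e), Metric.diam (dsq q') ^ s)
      ≤ C * (Real.sqrt 2 * 2 ^ (-k)) ^ s := by
    intro e _
    have hsub : F.filter (fun q' => off q' = e) ⊆
        𝒞.filter (fun q' => dsq q' ⊆ dyadicSq k (α + e.1) (β + e.2)) := by
      intro q' hq'
      rw [Finset.mem_filter] at hq' ⊢
      refine ⟨hF hq'.1, ?_⟩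
      have hk' := (hcond q' hq'.1).1
      have hanc := dyadic_subset_anc q'.2.1 q'.2.2 hk'
      have he := hq'.2
      have e1 : ancIdx k q'.1 q'.2.1 = α + e.1 := by
        have := congrArg Prod.fst he
        simp only [hoff] at this
        omega
      have e2 : ancIdx k q'.1 q'.2.2 = β + e.2 := by
        have := congrArg Prod.snd he
        simp only [hoff] at this
        omega
      rw [← e1, ← e2]
      exact hanc
    calc (∑ q' ∈ F.filter (fun q' => off q' = e), Metric.diam (dsq q') ^ s)
        ≤ ∑ q' ∈ 𝒞.filter (fun q' => dsq q' ⊆ dyadicSq k (α + e.1) (β + e.2)),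
            Metric.diam (dsq q') ^ s :=
          Finset.sum_le_sum_of_subset_of_nonneg hsub
            (fun r _ _ => Real.rpow_nonneg (dsq_diam_pos r).le s)
      _ ≤ C * Metric.diam (dyadicSq k (α + e.1) (β + e.2)) ^ s := hgood _ _ _
      _ = C * (Real.sqrt 2 * 2 ^ (-k)) ^ s := by rw [dyadic_diam]
  calc ∑ e ∈ E9, (∑ q' ∈ F.filter (fun q' => off q' = e), Metric.diam (dsq q') ^ s)
      ≤ ∑ _e ∈ E9, C * (Real.sqrt 2 * 2 ^ (-k)) ^ s := Finset.sum_le_sum hbound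
    _ = 9 * (C * (Real.sqrt 2 * 2 ^ (-k)) ^ s) := by
        rw [Finset.sum_const, nsmul_eq_mul]
        norm_num [hE9]

lemma diam_mono_lvl {q q' : ℤ × ℤ × ℤ} (h : q.1 ≤ q'.1) :
    Metric.diam (dsq q') ≤ Metric.diam (dsq q) := by
  rw [dsq_diam, dsq_diam]
  exact mul_le_mul_of_nonneg_left (zpow_le_zpow_right₀ (by norm_num) (by omega))
    (Real.sqrt_nonneg 2)

lemma rpow_sub_one_mul {x : ℝ} (hx : 0 < x) (s : ℝ) : x ^ (s-1) * x = x ^ s := by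
  nth_rewrite 2 [← Real.rpow_one x]
  rw [← Real.rpow_add hx]
  norm_num

lemma two_zpow_mul_rpow (k : ℤ) (s : ℝ) :
    (2:ℝ) ^ k * ((2:ℝ) ^ (-k)) ^ s = ((2:ℝ) ^ ((1:ℝ) - s)) ^ k := by
  have h2 : (0:ℝ) ≤ 2 := by norm_num
  rw [← Real.rpow_intCast (2:ℝ) k, ← Real.rpow_intCast (2:ℝ) (-k),
    ← Real.rpow_mul h2, ← Real.rpow_intCast ((2:ℝ) ^ ((1:ℝ) - s)) k,
    ← Real.rpow_mul h2, ← Real.rpow_add (by norm_num : (0:ℝ) < 2)]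
  congr 1
  push_cast
  ring

open scoped Classical in
lemma fixed_q_bound {s C : ℝ} (hs : 1 < s) (hC : 0 < C) {𝒞 : Finset (ℤ × ℤ × ℤ)}
    (hgood : ∀ i a b : ℤ,
      (∑ q ∈ 𝒞.filter (fun q => dsq q ⊆ dyadicSq i a b), Metric.diam (dsq q) ^ s) ≤
        C * Metric.diam (dyadicSq i a b) ^ s)
    (htot : (∑ q ∈ 𝒞, Metric.diam (dsq q) ^ s) ≤ C)
    (q : ℤ × ℤ × ℤ) (hq : q ∈ 𝒞) :
    (∑ q' ∈ 𝒞, if q.1 ≤ q'.1 then Pfun s q q' else 0) ≤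
      2 * π * C * (9 * (C ^ s⁻¹) ^ (s - 1) + 32 +
        144 * Real.sqrt 2 ^ s / (1 - 2 ^ ((1:ℝ) - s))) * Metric.diam (dsq q) ^ s := by
  have hπ := Real.pi_pos
  have hd := dsq_diam_pos q
  set d : ℝ := Metric.diam (dsq q) with hdd
  set M : ℝ := C ^ s⁻¹ with hMd
  have hM0 : 0 < M := Real.rpow_pos_of_pos hC _
  have hM : ∀ r ∈ 𝒞, Metric.diam (dsq r) ≤ M := by
    intro r hr
    have h1 : Metric.diam (dsq r) ^ s ≤ C :=
      (Finset.single_le_sum (f := fun r => Metric.diam (dsq r) ^ s)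
        (fun r _ => Real.rpow_nonneg (dsq_diam_pos r).le s) hr).trans htot
    have h2 : (Metric.diam (dsq r) ^ s) ^ s⁻¹ ≤ M :=
      Real.rpow_le_rpow (Real.rpow_nonneg (dsq_diam_pos r).le s) h1
        (inv_nonneg.2 (by linarith))
    rwa [Real.rpow_rpow_inv (dsq_diam_pos r).le (by linarith)] at h2
  set r : ℝ := (2:ℝ) ^ ((1:ℝ) - s) with hrd
  have hr0 : 0 < r := Real.rpow_pos_of_pos (by norm_num) _
  have hr1 : r < 1 := Real.rpow_lt_one_of_one_lt_of_neg (by norm_num) (by linarith)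
  set κ : ℤ × ℤ × ℤ → ℤ := fun q' => kst q q' with hκ
  have hmaps : ∀ q' ∈ 𝒞, κ q' ∈ 𝒞.image κ := fun q' h => Finset.mem_image_of_mem κ h
  rw [← Finset.sum_fiberwise_of_maps_to hmaps (fun q' => if q.1 ≤ q'.1 then Pfun s q q' else 0)]
  set NB : ℝ := 18 * π * C * M ^ (s-1) * d ^ s with hNB
  have hNB0 : 0 ≤ NB := by
    have := Real.rpow_nonneg hM0.le (s-1)
    have := Real.rpow_nonneg hd.le s
    positivity
  set Bnd : ℤ → ℝ := fun j => if j = q.1 then NB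
    else 32 * π * C * d ^ s * (if j ≤ 0 then (2:ℝ)^j else 9 * Real.sqrt 2 ^ s * r ^ j) with hBnd
  have key : ∀ j ∈ 𝒞.image κ,
      (∑ q' ∈ 𝒞.filter (fun q' => κ q' = j), if q.1 ≤ q'.1 then Pfun s q q' else 0) ≤ Bnd j := by
    intro j hj
    have hds : (0:ℝ) ≤ d ^ s := Real.rpow_nonneg hd.le s
    by_cases hcase : j = q.1
    · -- NEAR
      rw [hBnd]
      simp only [if_pos hcase]
      have hpt : ∀ q' ∈ 𝒞.filter (fun q' => κ q' = j),
          (if q.1 ≤ q'.1 then Pfun s q q' else 0) ≤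
            2 * π * d ^ (s-1) * Metric.diam (dsq q') ^ s := by
        intro q' hq'
        rw [Finset.mem_filter] at hq'
        have hk : kst q q' = q.1 := hcase ▸ hq'.2
        have hle' : q.1 ≤ q'.1 := by
          have h1 := kst_le_lvl q q'
          have h2 : kst q q' ≤ q'.1 := h1.trans (min_le_right _ _)
          omega
        have hlvl : lvl q q' = q.1 := min_eq_left hle'
        rw [if_pos hle']
        apply le_of_eq
        unfold Pfun
        rw [if_pos (by rw [hk, hlvl]), min_eq_right (diam_mono_lvl hle'),
          ← rpow_sub_one_mul (dsq_diam_pos q') s]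
        ring
      calc (∑ q' ∈ 𝒞.filter (fun q' => κ q' = j), if q.1 ≤ q'.1 then Pfun s q q' else 0)
          ≤ ∑ q' ∈ 𝒞.filter (fun q' => κ q' = j),
              2 * π * d ^ (s-1) * Metric.diam (dsq q') ^ s := Finset.sum_le_sum hpt
        _ = 2 * π * d ^ (s-1) *
              ∑ q' ∈ 𝒞.filter (fun q' => κ q' = j), Metric.diam (dsq q') ^ s := by
            rw [Finset.mul_sum]
        _ ≤ NB := by
            have hnine := nine_sum hgood q q.1 (𝒞.filter (fun q' => κ q' = j))
              (Finset.filter_subset _ _) (by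
                intro q' hq'
                rw [Finset.mem_filter] at hq'
                have hk : kst q q' = q.1 := hcase ▸ hq'.2
                have hle' : q.1 ≤ q'.1 := by
                  have h2 : kst q q' ≤ q'.1 := (kst_le_lvl q q').trans (min_le_right _ _)
                  omega
                refine ⟨hle', ?_⟩
                have := (kst_mem q q').2
                rwa [hk] at this)
            rw [← dsq_diam q, ← hdd] at hnine
            have hsum0 : (0:ℝ) ≤ ∑ q' ∈ 𝒞.filter (fun q' => κ q' = j),
                Metric.diam (dsq q') ^ s :=
              Finset.sum_nonneg (fun r _ => Real.rpow_nonneg (dsq_diam_pos r).le s)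
            have hdM : d ^ (s-1) ≤ M ^ (s-1) :=
              Real.rpow_le_rpow hd.le (hM q hq) (by linarith)
            have hmul := mul_le_mul hdM hnine hsum0 (Real.rpow_nonneg hM0.le _)
            rw [hNB]
            nlinarith [hmul, hπ]
    · -- FAR
      rw [hBnd]
      simp only [if_neg hcase]
      have hpt : ∀ q' ∈ 𝒞.filter (fun q' => κ q' = j),
          (if q.1 ≤ q'.1 then Pfun s q q' else 0) ≤
            32 * π * (2:ℝ)^j * d ^ s * Metric.diam (dsq q') ^ s := by
        intro q' hq'
        rw [Finset.mem_filter] at hq'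
        have hk : kst q q' = j := hq'.2
        by_cases hle' : q.1 ≤ q'.1
        · have hlvl : lvl q q' = q.1 := min_eq_left hle'
          rw [if_pos hle']
          apply le_of_eq
          unfold Pfun
          rw [if_neg (by rw [hk, hlvl]; exact hcase), min_eq_right (diam_mono_lvl hle'),
            max_eq_left (diam_mono_lvl hle'), hk,
            ← rpow_sub_one_mul (dsq_diam_pos q') s, ← rpow_sub_one_mul hd s,
            zpow_add₀ (by norm_num : (2:ℝ) ≠ 0) j 1]
          ring
        · rw [if_neg hle']
          have h2j := two_zpow_pos j
          have := Real.rpow_nonneg (dsq_diam_pos q').le s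
          positivity
      have hstep : (∑ q' ∈ 𝒞.filter (fun q' => κ q' = j), if q.1 ≤ q'.1 then Pfun s q q' else 0)
          ≤ 32 * π * (2:ℝ)^j * d ^ s *
            ∑ q' ∈ 𝒞.filter (fun q' => κ q' = j), Metric.diam (dsq q') ^ s := by
        rw [Finset.mul_sum]
        exact Finset.sum_le_sum hpt
      have h2j := two_zpow_pos j
      by_cases hj0 : j ≤ 0
      · rw [if_pos hj0]
        have hCsum : (∑ q' ∈ 𝒞.filter (fun q' => κ q' = j), Metric.diam (dsq q') ^ s) ≤ C := by
          apply le_trans _ htot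
          exact Finset.sum_le_sum_of_subset_of_nonneg (Finset.filter_subset _ _)
            (fun r _ _ => Real.rpow_nonneg (dsq_diam_pos r).le s)
        calc _ ≤ 32 * π * (2:ℝ)^j * d ^ s *
              ∑ q' ∈ 𝒞.filter (fun q' => κ q' = j), Metric.diam (dsq q') ^ s := hstep
          _ ≤ 32 * π * (2:ℝ)^j * d ^ s * C := by
              apply mul_le_mul_of_nonneg_left hCsum
              positivity
          _ = 32 * π * C * d ^ s * (2:ℝ)^j := by ring
      · rw [if_neg hj0]
        have hnine := nine_sum hgood q j (𝒞.filter (fun q' => κ q' = j))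
          (Finset.filter_subset _ _) (by
            intro q' hq'
            rw [Finset.mem_filter] at hq'
            have hk : kst q q' = j := hq'.2
            have hle' : j ≤ q'.1 := by
              have h2 : kst q q' ≤ q'.1 := (kst_le_lvl q q').trans (min_le_right _ _)
              omega
            refine ⟨hle', ?_⟩
            have := (kst_mem q q').2
            rwa [hk] at this)
        have hnine' : (∑ q' ∈ 𝒞.filter (fun q' => κ q' = j), Metric.diam (dsq q') ^ s) ≤
            9 * C * (Real.sqrt 2 ^ s * ((2:ℝ) ^ (-j)) ^ s) := by
          rw [← Real.mul_rpow (Real.sqrt_nonneg 2) (two_zpow_pos (-j)).le]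
          calc _ ≤ 9 * (C * (Real.sqrt 2 * 2 ^ (-j)) ^ s) := hnine
            _ = 9 * C * (Real.sqrt 2 * 2 ^ (-j)) ^ s := by ring
        calc _ ≤ 32 * π * (2:ℝ)^j * d ^ s *
              ∑ q' ∈ 𝒞.filter (fun q' => κ q' = j), Metric.diam (dsq q') ^ s := hstep
          _ ≤ 32 * π * (2:ℝ)^j * d ^ s * (9 * C * (Real.sqrt 2 ^ s * ((2:ℝ) ^ (-j)) ^ s)) := by
              apply mul_le_mul_of_nonneg_left hnine'
              positivity
          _ = 32 * π * C * d ^ s * (9 * Real.sqrt 2 ^ s * ((2:ℝ)^j * ((2:ℝ) ^ (-j)) ^ s)) := by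
              ring
          _ = 32 * π * C * d ^ s * (9 * Real.sqrt 2 ^ s * r ^ j) := by
              rw [two_zpow_mul_rpow j s, hrd]
  -- now sum the per-fiber bounds
  have hds : (0:ℝ) ≤ d ^ s := Real.rpow_nonneg hd.le s
  have hsum1 : (∑ j ∈ 𝒞.image κ, ∑ q' ∈ 𝒞.filter (fun q' => κ q' = j),
      if q.1 ≤ q'.1 then Pfun s q q' else 0) ≤ ∑ j ∈ 𝒞.image κ, Bnd j :=
    Finset.sum_le_sum key
  apply hsum1.trans
  rw [← Finset.sum_filter_add_sum_filter_not (𝒞.image κ) (fun j => j = q.1) Bnd]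
  have hT1 : (∑ j ∈ (𝒞.image κ).filter (fun j => j = q.1), Bnd j) ≤ NB := by
    rw [Finset.filter_eq']
    split_ifs with hmem
    · rw [Finset.sum_singleton, hBnd]
      simp
    · rw [Finset.sum_empty]
      exact hNB0
  have hT2 : (∑ j ∈ (𝒞.image κ).filter (fun j => ¬ j = q.1), Bnd j) ≤
      32 * π * C * d ^ s * 2 + 32 * π * C * d ^ s * (9 * Real.sqrt 2 ^ s * (1 / (1 - r))) := by
    rw [← Finset.sum_filter_add_sum_filter_not ((𝒞.image κ).filter (fun j => ¬ j = q.1))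
      (fun j => j ≤ 0) Bnd]
    apply add_le_add
    · -- low part
      set S₁ := ((𝒞.image κ).filter (fun j => ¬ j = q.1)).filter (fun j => j ≤ 0) with hS₁
      have he : ∀ j ∈ S₁, Bnd j = 32 * π * C * d ^ s * (2:ℝ)^j := by
        intro j hj
        rw [hS₁, Finset.mem_filter, Finset.mem_filter] at hj
        rw [hBnd]
        simp only [if_neg hj.1.2, if_pos hj.2]
      rw [Finset.sum_congr rfl he, ← Finset.mul_sum]
      apply mul_le_mul_of_nonneg_left _ (by positivity)
      apply sum_zpow_nonpos_le
      intro j hj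
      rw [hS₁, Finset.mem_filter] at hj
      exact hj.2
    · -- high part
      set S₂ := ((𝒞.image κ).filter (fun j => ¬ j = q.1)).filter (fun j => ¬ j ≤ 0) with hS₂
      have he : ∀ j ∈ S₂, Bnd j = 32 * π * C * d ^ s * (9 * Real.sqrt 2 ^ s) * r^j := by
        intro j hj
        rw [hS₂, Finset.mem_filter, Finset.mem_filter] at hj
        rw [hBnd]
        simp only [if_neg hj.1.2, if_neg hj.2]
        ring
      rw [Finset.sum_congr rfl he, ← Finset.mul_sum]
      have hz := sum_zpow_pos_le S₂ hr0.le hr1 (by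
        intro j hj
        rw [hS₂, Finset.mem_filter] at hj
        omega)
      calc 32 * π * C * d ^ s * (9 * Real.sqrt 2 ^ s) * (∑ j ∈ S₂, r ^ j)
          ≤ 32 * π * C * d ^ s * (9 * Real.sqrt 2 ^ s) * (1/(1-r)) := by
            apply mul_le_mul_of_nonneg_left hz
            have := Real.rpow_nonneg (Real.sqrt_nonneg 2) s
            positivity
        _ = 32 * π * C * d ^ s * (9 * Real.sqrt 2 ^ s * (1 / (1 - r))) := by ring
  have hfin : NB + (32 * π * C * d ^ s * 2 +
      32 * π * C * d ^ s * (9 * Real.sqrt 2 ^ s * (1 / (1 - r)))) =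
      2 * π * C * (9 * M ^ (s - 1) + 32 + 144 * Real.sqrt 2 ^ s / (1 - r)) * d ^ s := by
    rw [hNB]
    field_simp
    ring
  linarith [hT1, hT2]

def IsDyadicSquare (S : Set E) : Prop := ∃ i a b : ℤ, S = dyadicSq i a b

def unitSq : Set E := {p | p 0 ∈ Set.Ico (0 : ℝ) 1 ∧ p 1 ∈ Set.Ico (0 : ℝ) 1}

open scoped Classical in
/-- The angular average of the square integral of `f_θ` over a good dyadic cover is
bounded by a constant depending only on the good-cover constant `C` and on `s`, not on
the diameter of the cover. -/
theorem angular_L2_bound (s C : ℝ) (hs : 1 < s) (hC : 0 < C) :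
    ∃ C'' : ℝ, 0 < C'' ∧
      ∀ (K : Set E) (𝒞 : Finset (ℤ × ℤ × ℤ)),
        K ⊆ unitSq → MeasurableSet K → dimH K = ENNReal.ofReal s →
        0 < μH[s] K → μH[s] K < ⊤ →
        (K ⊆ ⋃ q ∈ 𝒞, dsq q) →
        (∀ q ∈ 𝒞, ∀ q' ∈ 𝒞, q ≠ q' → Disjoint (dsq q) (dsq q')) →
        (∀ i a b : ℤ,
          (∑ q ∈ 𝒞.filter (fun q => dsq q ⊆ dyadicSq i a b), Metric.diam (dsq q) ^ s) ≤
            C * Metric.diam (dyadicSq i a b) ^ s) →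
        (∑ q ∈ 𝒞, Metric.diam (dsq q) ^ s) ≤ C →
        (∫ θ in Set.Icc (-(π / 2)) (π / 2),
            (∫ x, (∑ q ∈ 𝒞,
              (proj θ '' dsq q).indicator
                (fun _ => Metric.diam (dsq q) ^ (s - 1)) x) ^ 2 ∂volume) ∂volume) ≤
          C'' := by
  have hπ := Real.pi_pos
  have hr1 : (2:ℝ) ^ ((1:ℝ) - s) < 1 :=
    Real.rpow_lt_one_of_one_lt_of_neg (by norm_num) (by linarith)
  set Λ : ℝ := 2 * π * C * (9 * (C ^ s⁻¹) ^ (s - 1) + 32 +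
    144 * Real.sqrt 2 ^ s / (1 - 2 ^ ((1:ℝ) - s))) with hΛ
  have hbr : (0:ℝ) < 9 * (C ^ s⁻¹) ^ (s - 1) + 32 +
      144 * Real.sqrt 2 ^ s / (1 - 2 ^ ((1:ℝ) - s)) := by
    have h1 : (0:ℝ) ≤ (C ^ s⁻¹) ^ (s-1) := Real.rpow_nonneg (Real.rpow_nonneg hC.le _) _
    have h2 : (0:ℝ) ≤ 144 * Real.sqrt 2 ^ s / (1 - 2 ^ ((1:ℝ) - s)) := by
      apply div_nonneg _ (by linarith)
      have := Real.rpow_nonneg (Real.sqrt_nonneg 2) s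
      linarith
    linarith
  have hΛ0 : 0 < Λ := by
    rw [hΛ]
    exact mul_pos (by positivity) hbr
  refine ⟨2 * Λ * C, by positivity, ?_⟩
  intro K 𝒞 _ _ _ _ _ _ _ hgood htot
  have hsymm : (∑ p ∈ 𝒞 ×ˢ 𝒞, Pfun s p.1 p.2) ≤
      2 * ∑ p ∈ (𝒞 ×ˢ 𝒞).filter (fun p => p.1.1 ≤ p.2.1), Pfun s p.1 p.2 := by
    rw [← Finset.sum_filter_add_sum_filter_not (𝒞 ×ˢ 𝒞) (fun p => p.1.1 ≤ p.2.1)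
      (fun p => Pfun s p.1 p.2)]
    have himg : (∑ p ∈ ((𝒞 ×ˢ 𝒞).filter (fun p => ¬ p.1.1 ≤ p.2.1)).image Prod.swap,
        Pfun s p.1 p.2)
        = ∑ p ∈ (𝒞 ×ˢ 𝒞).filter (fun p => ¬ p.1.1 ≤ p.2.1), Pfun s p.1 p.2 := by
      rw [Finset.sum_image (by intro x _ y _ h; exact Prod.swap_injective h)]
      apply Finset.sum_congr rfl
      intro p _
      exact (Pfun_symm s p.2 p.1)
    have h2 : (∑ p ∈ (𝒞 ×ˢ 𝒞).filter (fun p => ¬ p.1.1 ≤ p.2.1), Pfun s p.1 p.2) ≤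
        ∑ p ∈ (𝒞 ×ˢ 𝒞).filter (fun p => p.1.1 ≤ p.2.1), Pfun s p.1 p.2 := by
      rw [← himg]
      apply Finset.sum_le_sum_of_subset_of_nonneg
      · intro p hp
        rw [Finset.mem_image] at hp
        obtain ⟨x, hx, rfl⟩ := hp
        rw [Finset.mem_filter] at hx ⊢
        rw [Finset.mem_product] at hx ⊢
        obtain ⟨⟨hx1, hx2⟩, hx3⟩ := hx
        refine ⟨⟨hx2, hx1⟩, ?_⟩
        show x.2.1 ≤ x.1.1
        omega
      · intro p _ _
        exact Pfun_nonneg s p.1 p.2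
    linarith
  calc (∫ θ in Set.Icc (-(π / 2)) (π / 2),
          (∫ x, (∑ q ∈ 𝒞, (proj θ '' dsq q).indicator
            (fun _ => Metric.diam (dsq q) ^ (s - 1)) x) ^ 2 ∂volume) ∂volume)
      ≤ ∫ θ in Set.Icc (-(π / 2)) (π / 2), (∑ p ∈ 𝒞 ×ˢ 𝒞, gfun s p.1 p.2 θ) ∂volume := by
        apply integral_mono_of_nonneg
        · exact Filter.Eventually.of_forall (fun θ => integral_nonneg (fun x => sq_nonneg _))
        · exact integrable_finset_sum _ (fun p _ => gfun_integrable s p.1 p.2)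
        · exact Filter.Eventually.of_forall (fun θ => inner_bound s 𝒞 θ)
    _ = ∑ p ∈ 𝒞 ×ˢ 𝒞, ∫ θ in Set.Icc (-(π / 2)) (π / 2), gfun s p.1 p.2 θ ∂volume :=
        integral_finset_sum _ (fun p _ => gfun_integrable s p.1 p.2)
    _ ≤ ∑ p ∈ 𝒞 ×ˢ 𝒞, Pfun s p.1 p.2 :=
        Finset.sum_le_sum (fun p _ => gfun_integral_le s p.1 p.2)
    _ ≤ 2 * ∑ p ∈ (𝒞 ×ˢ 𝒞).filter (fun p => p.1.1 ≤ p.2.1), Pfun s p.1 p.2 := hsymm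
    _ = 2 * ∑ q ∈ 𝒞, ∑ q' ∈ 𝒞, (if q.1 ≤ q'.1 then Pfun s q q' else 0) := by
        have e := Finset.sum_product' 𝒞 𝒞 (fun u v => if u.1 ≤ v.1 then Pfun s u v else (0:ℝ))
        rw [Finset.sum_filter, e]
    _ ≤ 2 * ∑ q ∈ 𝒞, Λ * Metric.diam (dsq q) ^ s := by
        apply mul_le_mul_of_nonneg_left _ (by norm_num)
        apply Finset.sum_le_sum
        intro q hq
        rw [hΛ]
        exact fixed_q_bound hs hC hgood htot q hq
    _ = 2 * Λ * (∑ q ∈ 𝒞, Metric.diam (dsq q) ^ s) := by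
        rw [← Finset.mul_sum]
        ring
    _ ≤ 2 * Λ * C := by
        apply mul_le_mul_of_nonneg_left htot (by positivity)
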